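/- Let ℓ: Σᵢ aᵢxᵢ ≤ k be a true literal under α, let op1 change variable v1 (appearing in ℓ) so that ℓ becomes false, and let v2 be another variable appearing in ℓ with nonzero coefficient. Then there exists an integer value val2 for v2 such that after simultaneously performing op1 and assigning v2 := val2, the literal ℓ is true (i.e., a compensating operation for ℓ always exists). -/
import Mathlib


/-- If ℓ: Σ aᵢxᵢ ≤ k is true under α, op1 assigns v1 a new
value val1 making ℓ false, and v2 ≠ v1 appears in ℓ with nonzero coefficient,
then there is a value val2 for v2 such that simultaneously performing both
assignments makes ℓ true: a compensating operation always exists. -/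
theorem stmt_10 {n : ℕ} (a : Fin n → ℤ) (k : ℤ) (α : Fin n → ℤ)
    (v1 v2 : Fin n) (hne : v2 ≠ v1) (ha2 : a v2 ≠ 0) (val1 : ℤ)
    (htrue : (∑ i, a i * α i) ≤ k)
    (hfalse : ¬ (∑ i, a i * Function.update α v1 val1 i) ≤ k) :
    ∃ val2 : ℤ,
      (∑ i, a i * Function.update (Function.update α v1 val1) v2 val2 i)
        ≤ k := by
  have key : ∀ (f : Fin n → ℤ) (v : Fin n) (x : ℤ),
      (∑ i, a i * Function.update f v x i) = (∑ i, a i * f i) + a v * (x - f v) := by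
    intro f v x
    have h : ∀ i : Fin n, a i * Function.update f v x i
        = a i * f i + (if i = v then a v * (x - f v) else 0) := by
      intro i
      by_cases h : i = v
      · subst h; simp [Function.update_self]; ring
      · simp [Function.update_of_ne h, h]
    calc (∑ i, a i * Function.update f v x i)
        = ∑ i, (a i * f i + (if i = v then a v * (x - f v) else 0)) :=
          Finset.sum_congr rfl (fun i _ => h i)
      _ = (∑ i, a i * f i) + ∑ i, (if i = v then a v * (x - f v) else 0) := by
          rw [Finset.sum_add_distrib]
      _ = (∑ i, a i * f i) + a v * (x - f v) := by
          rw [Finset.sum_ite_eq' Finset.univ v (fun _ => a v * (x - f v))]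
          simp
  set β := Function.update α v1 val1 with hβ
  set S := ∑ i, a i * β i with hS
  have hSk : k < S := lt_of_not_ge hfalse
  have hβ2 : β v2 = α v2 := Function.update_of_ne hne _ _
  have hsq : 1 ≤ (a v2) ^ 2 := by
    rcases lt_or_gt_of_ne ha2 with h | h <;> nlinarith
  refine ⟨α v2 + a v2 * (k - S), ?_⟩
  rw [key β v2 _]
  rw [hβ2]
  have : a v2 * (α v2 + a v2 * (k - S) - α v2) = (a v2) ^ 2 * (k - S) := by ring
  rw [this]
  nlinarith
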